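/- Let Z be a standard normal random variable, a > 0, b ≥ 0. Then E[Z·sin(bZ)/(a²+Z²)] = −√(2π)·e^{a²/2}·(sinh(ab) + (1/2)(e^{−ab}Φ(a−b) − e^{ab}Φ(a+b))). -/

import Mathlib

open MeasureTheory ProbabilityTheory Real

/-- Standard normal cumulative distribution function. -/
noncomputable def stdNormalCDF (x : ℝ) : ℝ :=
  ∫ u in Set.Iic x, Real.exp (-u ^ 2 / 2) / Real.sqrt (2 * Real.pi)

open scoped NNReal ENNReal

section Aux
open Set Complex

-- Laplace transform of sin
lemma laplace_sin {a : ℝ} (ha : 0 < a) (z : ℝ) :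
    ∫ t in Ioi (0:ℝ), Real.exp (-a*t) * Real.sin (z*t) = z / (a^2 + z^2) := by
  have hD : (0:ℝ) < a^2 + z^2 := by positivity
  set F : ℝ → ℝ := fun t => -(Real.exp (-a*t) * (a * Real.sin (z*t) + z * Real.cos (z*t))) / (a^2+z^2) with hF
  have hderiv : ∀ t ∈ Ioi (0:ℝ), HasDerivAt F (Real.exp (-a*t) * Real.sin (z*t)) t := by
    intro t _
    have h1 : HasDerivAt (fun t : ℝ => Real.exp (-a*t)) (-a * Real.exp (-a*t)) t := by
      simpa [mul_comm] using ((hasDerivAt_id t).const_mul (-a)).exp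
    have h2 : HasDerivAt (fun t : ℝ => a * Real.sin (z*t) + z * Real.cos (z*t))
        (a * (z * Real.cos (z*t)) + z * (-Real.sin (z*t) * z)) t := by
      have hs : HasDerivAt (fun t : ℝ => Real.sin (z*t)) (Real.cos (z*t) * z) t := by
        simpa [mul_comm] using ((hasDerivAt_id t).const_mul z).sin
      have hc : HasDerivAt (fun t : ℝ => Real.cos (z*t)) (-Real.sin (z*t) * z) t := by
        simpa [mul_comm] using ((hasDerivAt_id t).const_mul z).cos
      exact ((hs.const_mul a).add (hc.const_mul z)).congr_deriv (by ring)
    have := ((h1.mul h2).neg).div_const (a^2+z^2)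
    refine this.congr_deriv ?_
    rw [div_eq_iff hD.ne']
    ring
  have hcont : ContinuousWithinAt F (Ici (0:ℝ)) 0 := by
    apply Continuous.continuousWithinAt
    fun_prop
  have hint : IntegrableOn (fun t => Real.exp (-a*t) * Real.sin (z*t)) (Ioi (0:ℝ)) := by
    apply (exp_neg_integrableOn_Ioi 0 ha).mono'
      (Continuous.aestronglyMeasurable (by continuity))
    filter_upwards [] with t
    rw [norm_mul, Real.norm_eq_abs, Real.norm_eq_abs, abs_of_pos (Real.exp_pos _)]
    calc Real.exp (-a*t) * |Real.sin (z*t)| ≤ Real.exp (-a*t) * 1 :=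
          mul_le_mul_of_nonneg_left (abs_sin_le_one _) (Real.exp_pos _).le
      _ = Real.exp (-a*t) := mul_one _
  have htend : Filter.Tendsto F Filter.atTop (nhds 0) := by
    have hb : Filter.Tendsto (fun t : ℝ => Real.exp (-a*t) * ((|a| + |z|) / (a^2+z^2)))
        Filter.atTop (nhds 0) := by
      have : Filter.Tendsto (fun t : ℝ => Real.exp (-a*t)) Filter.atTop (nhds 0) := by
        have h0 : Filter.Tendsto (fun t : ℝ => a * t) Filter.atTop Filter.atTop :=
          Filter.Tendsto.const_mul_atTop ha Filter.tendsto_id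
        have := Real.tendsto_exp_neg_atTop_nhds_zero.comp h0
        simpa [Function.comp_def, neg_mul] using this
      simpa using this.mul_const ((|a| + |z|) / (a^2+z^2))
    apply squeeze_zero_norm _ hb
    intro t
    rw [hF]
    simp only [Real.norm_eq_abs, abs_div, abs_neg]
    rw [abs_of_pos hD, mul_div_assoc' (rexp (-a*t)), div_le_div_iff_of_pos_right hD, abs_mul,
      abs_of_pos (Real.exp_pos _)]
    apply mul_le_mul_of_nonneg_left _ (Real.exp_pos _).le
    calc |a * Real.sin (z*t) + z * Real.cos (z*t)| ≤ |a * Real.sin (z*t)| + |z * Real.cos (z*t)| := abs_add_le _ _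
      _ ≤ |a| * 1 + |z| * 1 := by
          rw [abs_mul, abs_mul]
          gcongr <;> [exact abs_sin_le_one _; exact abs_cos_le_one _]
      _ = |a| + |z| := by ring
  have := integral_Ioi_of_hasDerivAt_of_tendsto hcont hderiv hint htend
  rw [this, hF]
  simp [Real.exp_zero]
  field_simp


lemma cos_gaussian (c : ℝ) :
    ∫ x : ℝ, Real.cos (c*x) * Real.exp (-x^2/2) = Real.sqrt (2*π) * Real.exp (-c^2/2) := by
  have hb : (0:ℝ) < (1/2 : ℂ).re := by norm_num
  have h := fourierIntegral_gaussian (b := (1/2 : ℂ)) hb (c : ℂ)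
  have hint : Integrable (fun x : ℝ => Complex.exp (I * c * x) * Complex.exp (-(1/2 : ℂ) * x ^ 2)) := by
    have h2 := integrable_cexp_quadratic (b := (1/2:ℂ)) hb (I * c) 0
    have heq : (fun x : ℝ => Complex.exp (I*c*x) * Complex.exp (-(1/2:ℂ)*x^2))
        = fun x : ℝ => Complex.exp (-(1/2:ℂ)*x^2 + I*c*x + 0) := by
      funext x; rw [← Complex.exp_add]; ring_nf
    rw [heq]; exact h2
  have hre := integral_re (𝕜 := ℂ) hint
  simp only [RCLike.re_to_complex] at hre
  have hL : ∀ x : ℝ, (Complex.exp (I * c * x) * Complex.exp (-(1/2 : ℂ) * x ^ 2)).re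
      = Real.cos (c*x) * Real.exp (-x^2/2) := by
    intro x
    rw [← Complex.exp_add]
    have h3 : I * (c:ℂ) * x + -(1/2 : ℂ) * x ^ 2 = ((-x^2/2 : ℝ) : ℂ) + ((c*x : ℝ):ℂ) * I := by
      push_cast; ring
    rw [h3, Complex.exp_add, ← Complex.ofReal_exp, Complex.re_ofReal_mul,
      Complex.exp_ofReal_mul_I_re]
    ring
  have hR : (((π:ℂ)/(1/2)) ^ (1/2 : ℂ) * Complex.exp (-(c:ℂ)^2/(4*(1/2)))).re
      = Real.sqrt (2*π) * Real.exp (-c^2/2) := by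
    have h4 : ((π:ℂ)/(1/2)) = ((2*π : ℝ) : ℂ) := by push_cast; ring
    have h5 : ((2*π : ℝ) : ℂ) ^ (1/2 : ℂ) = ((Real.sqrt (2*π) : ℝ) : ℂ) := by
      rw [Real.sqrt_eq_rpow, Complex.ofReal_cpow (by positivity)]
      norm_num
    have h6 : (-(c:ℂ)^2/(4*(1/2))) = ((-c^2/2 : ℝ) : ℂ) := by push_cast; ring
    rw [h4, h5, h6, ← Complex.ofReal_exp, ← Complex.ofReal_mul, Complex.ofReal_re]
  calc ∫ x : ℝ, Real.cos (c*x) * Real.exp (-x^2/2)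
      = ∫ x : ℝ, (Complex.exp (I * c * x) * Complex.exp (-(1/2 : ℂ) * x ^ 2)).re := by
        congr 1; funext x; rw [hL]
    _ = (∫ x : ℝ, Complex.exp (I * c * x) * Complex.exp (-(1/2 : ℂ) * x ^ 2)).re := hre
    _ = _ := by rw [h, hR]


lemma integral_Ioi_comp_sub (f : ℝ → ℝ) (c : ℝ) :
    ∫ t in Ioi (0:ℝ), f (t - c) = ∫ u in Ioi (-c), f u := by
  have A : MeasurableEmbedding (fun x : ℝ => x + (-c)) :=
    (Homeomorph.addRight (-c)).isClosedEmbedding.measurableEmbedding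
  have h := A.setIntegral_map (μ := volume) f (Ioi (-c))
  rw [map_add_right_eq_self volume (-c)] at h
  have hpre : (fun x : ℝ => x + (-c)) ⁻¹' (Ioi (-c)) = Ioi 0 := by
    ext x; simp [Set.mem_Ioi]
  rw [hpre] at h
  simp only [sub_eq_add_neg]
  exact h.symm

-- half-line shifted gaussian
lemma halfline_gaussian (c : ℝ) :
    ∫ t in Ioi (0:ℝ), Real.exp (-(t-c)^2/2) = ∫ u in Iic c, Real.exp (-u^2/2) := by
  have h1 := integral_Ioi_comp_sub (fun u => Real.exp (-u^2/2)) c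
  rw [h1]
  have h2 : ∫ u in Ioi (-c), Real.exp (-u^2/2) = ∫ u in Ioi (-c), Real.exp (-(-u)^2/2) := by
    apply setIntegral_congr_fun measurableSet_Ioi
    intro x _; show Real.exp (-x^2/2) = Real.exp (-(-x)^2/2); rw [neg_sq]
  rw [h2, integral_comp_neg_Ioi (-c) (fun u => Real.exp (-u^2/2)), neg_neg]

-- total gaussian
lemma total_gaussian : ∫ u : ℝ, Real.exp (-u^2/2) = Real.sqrt (2*π) := by
  have h := integral_gaussian (1/2)
  rw [show π / (1/2 : ℝ) = 2*π by ring] at h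
  rw [← h]
  congr 1; funext x; congr 1; ring

lemma cdf_compl (c : ℝ) :
    (∫ u in Iic c, Real.exp (-u^2/2)) + (∫ u in Iic (-c), Real.exp (-u^2/2))
      = Real.sqrt (2*π) := by
  have h2 : (∫ u in Iic (-c), Real.exp (-u^2/2)) = ∫ u in Ioi c, Real.exp (-u^2/2) := by
    have h3 : ∫ u in Iic (-c), Real.exp (-u^2/2) = ∫ u in Iic (-c), Real.exp (-(-u)^2/2) := by
      apply setIntegral_congr_fun measurableSet_Iic
      intro x _; show Real.exp (-x^2/2) = Real.exp (-(-x)^2/2); rw [neg_sq]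
    rw [h3, integral_comp_neg_Iic (-c) (fun u => Real.exp (-u^2/2)), neg_neg]
  rw [h2, ← total_gaussian]
  have hint : Integrable (fun u : ℝ => Real.exp (-u^2/2)) := by
    have := integrable_exp_neg_mul_sq (b := (1/2:ℝ)) (by norm_num)
    apply this.congr
    filter_upwards [] with x
    congr 1; ring
  rw [← intervalIntegral.integral_Iic_add_Ioi (hint.integrableOn) (hint.integrableOn)]






lemma integrable_gauss : Integrable (fun u : ℝ => Real.exp (-u^2/2)) := by
  have := integrable_exp_neg_mul_sq (b := (1/2:ℝ)) (by norm_num)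
  apply this.congr
  filter_upwards [] with x
  congr 1; ring

lemma integrable_cos_gauss (c : ℝ) :
    Integrable (fun z : ℝ => Real.cos (c*z) * Real.exp (-z^2/2)) := by
  apply integrable_gauss.mono' (Continuous.aestronglyMeasurable (by continuity))
  filter_upwards [] with z
  rw [norm_mul, Real.norm_eq_abs, Real.norm_eq_abs, abs_of_pos (Real.exp_pos _)]
  calc |Real.cos (c*z)| * Real.exp (-z^2/2) ≤ 1 * Real.exp (-z^2/2) :=
        mul_le_mul_of_nonneg_right (Real.abs_cos_le_one _) (Real.exp_pos _).le
    _ = Real.exp (-z^2/2) := one_mul _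

lemma sqrt_two_pi_pos : (0:ℝ) < Real.sqrt (2*π) := Real.sqrt_pos.mpr (by positivity)

end Aux

open Set in
theorem normal_expectation_sin (a b : ℝ) (ha : 0 < a) (hb : 0 ≤ b) :
    ∫ z, z * Real.sin (b * z) / (a ^ 2 + z ^ 2) ∂(gaussianReal 0 1) =
      -(Real.sqrt (2 * Real.pi) * Real.exp (a ^ 2 / 2) *
        (Real.sinh (a * b) +
          (1 / 2) * (Real.exp (-(a * b)) * stdNormalCDF (a - b) -
            Real.exp (a * b) * stdNormalCDF (a + b)))) := by
  -- Step A: density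
  have hpdf : ∀ z : ℝ, gaussianPDFReal 0 1 z = (Real.sqrt (2*π))⁻¹ * Real.exp (-z^2/2) := by
    intro z
    rw [gaussianPDFReal]
    push_cast
    norm_num
  have hA : ∫ z, z * Real.sin (b * z) / (a ^ 2 + z ^ 2) ∂(gaussianReal 0 1)
      = ∫ z : ℝ, (Real.sqrt (2*π))⁻¹ * Real.exp (-z^2/2) * (z * Real.sin (b * z) / (a ^ 2 + z ^ 2)) := by
    rw [gaussianReal_of_var_ne_zero 0 one_ne_zero, gaussianPDF_def]
    have : (fun x : ℝ => ENNReal.ofReal (gaussianPDFReal 0 1 x))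
        = fun x : ℝ => ((Real.toNNReal (gaussianPDFReal 0 1 x) : ℝ≥0) : ℝ≥0∞) := rfl
    rw [this, integral_withDensity_eq_integral_smul
      ((measurable_gaussianPDFReal 0 1).real_toNNReal)]
    congr 1; funext z
    rw [NNReal.smul_def, Real.coe_toNNReal _ (gaussianPDFReal_nonneg 0 1 z), hpdf z,
      smul_eq_mul]
  rw [hA]
  set K := Real.sqrt (2*π) with hK
  have hK0 : (0:ℝ) < K := sqrt_two_pi_pos
  set h : ℝ → ℝ → ℝ := fun z t =>
    Real.sin (b*z) * Real.exp (-z^2/2) * (Real.exp (-a*t) * Real.sin (z*t)) with hh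
  -- Step B: pointwise laplace representation
  have hB : ∀ z : ℝ, K⁻¹ * Real.exp (-z^2/2) * (z * Real.sin (b*z) / (a^2+z^2))
      = K⁻¹ * ∫ t in Ioi (0:ℝ), h z t := by
    intro z
    rw [hh]
    simp only []
    rw [integral_const_mul, laplace_sin ha z]
    ring
  simp_rw [hB]
  rw [integral_const_mul]
  -- Step C: Fubini
  have hIntProd : Integrable (Function.uncurry h)
      (volume.prod (volume.restrict (Ioi (0:ℝ)))) := by
    have hg : Integrable (fun p : ℝ × ℝ => Real.exp (-p.1^2/2) * Real.exp (-a*p.2))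
        (volume.prod (volume.restrict (Ioi (0:ℝ)))) :=
      Integrable.mul_prod integrable_gauss (exp_neg_integrableOn_Ioi 0 ha)
    apply hg.mono' (Continuous.aestronglyMeasurable (by fun_prop))
    filter_upwards [] with p
    rw [Function.uncurry, hh]
    simp only [norm_mul, Real.norm_eq_abs, Real.abs_exp]
    calc |Real.sin (b*p.1)| * Real.exp (-p.1^2/2) * (Real.exp (-a*p.2) * |Real.sin (p.1*p.2)|)
        ≤ 1 * Real.exp (-p.1^2/2) * (Real.exp (-a*p.2) * 1) := by
          gcongr
          · exact Real.abs_sin_le_one _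
          · exact Real.abs_sin_le_one _
      _ = Real.exp (-p.1^2/2) * Real.exp (-a*p.2) := by ring
  rw [integral_integral_swap hIntProd]
  -- Step D: inner z-integral
  have hD : ∀ t : ℝ, ∫ z : ℝ, h z t
      = Real.exp (-a*t) * (1/2 * (K * Real.exp (-(b-t)^2/2) - K * Real.exp (-(b+t)^2/2))) := by
    intro t
    have hpt : ∀ z : ℝ, h z t = Real.exp (-a*t) *
        (1/2 * (Real.cos ((b-t)*z) * Real.exp (-z^2/2) - Real.cos ((b+t)*z) * Real.exp (-z^2/2))) := by
      intro z
      rw [hh]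
      simp only []
      have hps : Real.sin (b*z) * Real.sin (z*t)
          = (Real.cos ((b-t)*z) - Real.cos ((b+t)*z))/2 := by
        rw [show (b-t)*z = b*z - t*z by ring, show (b+t)*z = b*z + t*z by ring,
          Real.cos_sub, Real.cos_add, show z*t = t*z from mul_comm z t]
        ring
      linear_combination (Real.exp (-a*t) * Real.exp (-z^2/2)) * hps
    simp_rw [hpt]
    rw [integral_const_mul, integral_const_mul,
      integral_sub (integrable_cos_gauss (b-t)) (integrable_cos_gauss (b+t)),
      cos_gaussian (b-t), cos_gaussian (b+t)]
  simp_rw [hD]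
  -- Step E: t-integral with completed squares
  have he1 : ∀ t : ℝ, Real.exp (-a*t) * Real.exp (-(b-t)^2/2)
      = Real.exp (a^2/2) * Real.exp (-(a*b)) * Real.exp (-(t-(b-a))^2/2) := by
    intro t
    rw [← Real.exp_add, ← Real.exp_add, ← Real.exp_add]
    congr 1; ring
  have he2 : ∀ t : ℝ, Real.exp (-a*t) * Real.exp (-(b+t)^2/2)
      = Real.exp (a^2/2) * Real.exp (a*b) * Real.exp (-(t-(-b-a))^2/2) := by
    intro t
    rw [← Real.exp_add, ← Real.exp_add, ← Real.exp_add]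
    congr 1; ring
  have hT : ∫ t in Ioi (0:ℝ),
        Real.exp (-a*t) * (1/2 * (K * Real.exp (-(b-t)^2/2) - K * Real.exp (-(b+t)^2/2)))
      = K * (1/2) * (Real.exp (a^2/2) * Real.exp (-(a*b)) * (∫ u in Iic (b-a), Real.exp (-u^2/2))
          - Real.exp (a^2/2) * Real.exp (a*b) * (∫ u in Iic (-b-a), Real.exp (-u^2/2))) := by
    have hcong : ∫ t in Ioi (0:ℝ),
          Real.exp (-a*t) * (1/2 * (K * Real.exp (-(b-t)^2/2) - K * Real.exp (-(b+t)^2/2)))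
        = ∫ t in Ioi (0:ℝ), K * (1/2) *
            (Real.exp (a^2/2) * Real.exp (-(a*b)) * Real.exp (-(t-(b-a))^2/2)
              - Real.exp (a^2/2) * Real.exp (a*b) * Real.exp (-(t-(-b-a))^2/2)) := by
      apply setIntegral_congr_fun measurableSet_Ioi
      intro t _
      linear_combination (K/2) * he1 t - (K/2) * he2 t
    rw [hcong, integral_const_mul,
      integral_sub
        (((integrable_gauss.comp_sub_right (b-a)).integrableOn).const_mul _)
        (((integrable_gauss.comp_sub_right (-b-a)).integrableOn).const_mul _),
      integral_const_mul, integral_const_mul, halfline_gaussian (b-a), halfline_gaussian (-b-a)]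
  rw [hT]
  -- Step F: final algebra
  have hG1 : (∫ u in Iic (b-a), Real.exp (-u^2/2))
      = K - ∫ u in Iic (a-b), Real.exp (-u^2/2) := by
    have := cdf_compl (a-b)
    rw [show -(a-b) = b-a by ring] at this
    linarith
  have hG2 : (∫ u in Iic (-b-a), Real.exp (-u^2/2))
      = K - ∫ u in Iic (a+b), Real.exp (-u^2/2) := by
    have := cdf_compl (a+b)
    rw [show -(a+b) = -b-a by ring] at this
    linarith
  have hcdf : ∀ c : ℝ, stdNormalCDF c = (∫ u in Iic c, Real.exp (-u^2/2)) / K := by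
    intro c
    rw [stdNormalCDF, integral_div]
  rw [hG1, hG2, hcdf, hcdf, Real.sinh_eq]
  have hPQ : Real.exp (a*b) * Real.exp (-(a*b)) = 1 := by
    rw [← Real.exp_add]; simp
  field_simp
  ring
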